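/- Let n ≥ 2 and suppose (T_n*, Y) is a tiling of the symmetric group S_n, where T_n* is the set of all transpositions in S_n. Then for every partition λ = (λ_1,…,λ_ℓ) of n satisfying ∑_{i=1}^{ℓ} λ_i(λ_i − 2i + 1) > 0 (equivalently, the content sum of the Young diagram of λ is positive), the set Y is λ-transitive. -/

import Mathlib

/-- `(X, Y)` is a tiling of the group `G`: every element of `G` can be written as `x * y`
for a unique pair `(x, y) ∈ X × Y`. -/
def IsTiling {G : Type*} [Group G] (X Y : Set G) : Prop :=
  ∀ g : G, ∃! p : G × G, p.1 ∈ X ∧ p.2 ∈ Y ∧ p.1 * p.2 = g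

/-- `T_n^*`: the set of all transpositions in the symmetric group `S_n`. -/
def transpositions (n : ℕ) : Set (Equiv.Perm (Fin n)) :=
  {σ : Equiv.Perm (Fin n) | σ.IsSwap}

namespace TTProof

open Finset Equiv Function

open scoped Classical

variable {n l : ℕ}

/-- The fiber of a coloring over a color. -/
noncomputable def tfib (c : Fin n → Fin l) (i : Fin l) : Finset (Fin n) :=
  Finset.univ.filter fun x => c x = i

@[simp] lemma mem_tfib {c : Fin n → Fin l} {i : Fin l} {x : Fin n} :
    x ∈ tfib c i ↔ c x = i := by simp [tfib]

/-- Colorings with prescribed fiber sizes (ordered set partitions). -/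
noncomputable def tOm (lam : Fin l → ℕ) : Finset (Fin n → Fin l) :=
  Finset.univ.filter fun c => ∀ i, (tfib c i).card = lam i

lemma mem_tOm {lam : Fin l → ℕ} {c : Fin n → Fin l} :
    c ∈ tOm lam ↔ ∀ i, (tfib c i).card = lam i := by simp [tOm]

/-- Action of a permutation on colorings. -/
noncomputable def tact (g : Equiv.Perm (Fin n)) (c : Fin n → Fin l) : Fin n → Fin l :=
  c ∘ ⇑g⁻¹

lemma tact_apply (g : Equiv.Perm (Fin n)) (c : Fin n → Fin l) (x : Fin n) :
    tact g c x = c (g⁻¹ x) := rfl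

lemma tact_one (c : Fin n → Fin l) : tact (1 : Equiv.Perm (Fin n)) c = c := by
  funext x; simp [tact]

lemma tact_mul (g h : Equiv.Perm (Fin n)) (c : Fin n → Fin l) :
    tact (g * h) c = tact g (tact h c) := by
  funext x; simp [tact, mul_inv_rev]

lemma tact_inv_tact (g : Equiv.Perm (Fin n)) (c : Fin n → Fin l) :
    tact g⁻¹ (tact g c) = c := by
  rw [← tact_mul, inv_mul_cancel, tact_one]

lemma tact_tact_inv (g : Equiv.Perm (Fin n)) (c : Fin n → Fin l) :
    tact g (tact g⁻¹ c) = c := by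
  rw [← tact_mul, mul_inv_cancel, tact_one]

lemma tfib_tact (g : Equiv.Perm (Fin n)) (c : Fin n → Fin l) (i : Fin l) :
    tfib (tact g c) i = (tfib c i).image ⇑g := by
  ext x
  simp only [mem_tfib, mem_image, tact_apply]
  constructor
  · intro h; exact ⟨g⁻¹ x, by simpa using h, by simp⟩
  · rintro ⟨a, ha, rfl⟩; simpa using ha

lemma tact_mem_tOm {lam : Fin l → ℕ} {c : Fin n → Fin l} (hc : c ∈ tOm lam)
    (g : Equiv.Perm (Fin n)) : tact g c ∈ tOm lam := by
  rw [mem_tOm] at hc ⊢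
  intro i
  rw [tfib_tact, Finset.card_image_of_injective _ g.injective]
  exact hc i

lemma tfib_update (c : Fin n → Fin l) (x : Fin n) (v : Fin l) (k : Fin l) :
    tfib (Function.update c x v) k =
      if k = v then insert x (tfib c k) else (tfib c k).erase x := by
  ext w
  by_cases hk : k = v <;> by_cases hw : w = x <;>
    simp [hk, hw, Function.update_apply, mem_tfib, Finset.mem_insert, Finset.mem_erase] <;>
    tauto


section Update

variable {lam : Fin l → ℕ} {a b : Fin l}

/-- The modified shape after moving one point from color `a` to color `b`. -/
noncomputable def tmu (lam : Fin l → ℕ) (a b : Fin l) : Fin l → ℕ :=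
  fun k => if k = b then lam k + 1 else if k = a then lam k - 1 else lam k

lemma update_mem_tOm_fwd (hab : a ≠ b) (ha : 0 < lam a) {c' : Fin n → Fin l} {y : Fin n}
    (hc' : c' ∈ tOm (tmu lam a b)) (hy : c' y = b) :
    Function.update c' y a ∈ tOm lam := by
  rw [mem_tOm] at hc' ⊢
  intro k
  rw [tfib_update]
  by_cases hk : k = a
  · have hkb : k ≠ b := by rw [hk]; exact hab
    have hyk : y ∉ tfib c' k := by
      simp only [mem_tfib, hy]
      intro h
      exact hab (hk.symm.trans h.symm)
    rw [if_pos hk, Finset.card_insert_of_notMem hyk, hc' k]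
    have ha' : 0 < lam k := hk ▸ ha
    simp only [tmu, if_neg hkb, if_pos hk]
    omega
  · rw [if_neg hk]
    by_cases hkb : k = b
    · have hyk : y ∈ tfib c' k := by rw [mem_tfib, hy, hkb]
      rw [Finset.card_erase_of_mem hyk, hc' k]
      simp [tmu, if_pos hkb]
    · have hyk : y ∉ tfib c' k := by
        simp only [mem_tfib, hy]
        exact fun h => hkb h.symm
      rw [Finset.erase_eq_of_notMem hyk, hc' k]
      simp [tmu, hk, hkb]

lemma update_mem_tOm_bwd (hab : a ≠ b) {c : Fin n → Fin l} {x : Fin n}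
    (hc : c ∈ tOm lam) (hx : c x = a) :
    Function.update c x b ∈ tOm (tmu lam a b) := by
  rw [mem_tOm] at hc ⊢
  intro k
  rw [tfib_update]
  by_cases hk : k = b
  · have hxk : x ∉ tfib c k := by
      simp only [mem_tfib, hx]
      intro h
      exact hab (h.trans hk)
    rw [if_pos hk, Finset.card_insert_of_notMem hxk, hc k]
    simp [tmu, if_pos hk]
  · rw [if_neg hk]
    by_cases hka : k = a
    · have hxk : x ∈ tfib c k := by rw [mem_tfib, hx, hka]
      rw [Finset.card_erase_of_mem hxk, hc k]
      have hkb : k ≠ b := hk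
      simp [tmu, if_neg hkb, if_pos hka]
    · have hxk : x ∉ tfib c k := by
        simp only [mem_tfib, hx]
        exact fun h => hka h.symm
      rw [Finset.erase_eq_of_notMem hxk, hc k]
      simp [tmu, hk, hka]

end Update

lemma sum_diag' {α M : Type*} [DecidableEq α] [AddCommMonoid M] (s : Finset α)
    (f : α × α → M) : ∑ p ∈ s.diag, f p = ∑ x ∈ s, f (x, x) := by
  apply Finset.sum_nbij' (i := fun p => p.1) (j := fun x => (x, x))
  · intro p hp; exact (Finset.mem_diag.1 hp).1
  · intro x hx; exact Finset.mem_diag.2 ⟨hx, rfl⟩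
  · intro p hp
    exact Prod.ext rfl (Finset.mem_diag.1 hp).2
  · intro x _; rfl
  · intro p hp
    have hp2 : p = (p.1, p.1) := Prod.ext rfl (Finset.mem_diag.1 hp).2.symm
    conv_lhs => rw [hp2]

lemma update_eq_swap {c' : Fin n → Fin l} {y y' : Fin n} {a b : Fin l}
    (hy : c' y = b) (hy' : c' y' = b) (hne : y ≠ y') :
    Function.update c' y' a = tact (Equiv.swap y y') (Function.update c' y a) := by
  funext w
  rw [tact_apply, Equiv.swap_inv]
  by_cases hw : w = y'
  · subst hw
    rw [Function.update_self, Equiv.swap_apply_right, Function.update_self]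
  · by_cases hwy : w = y
    · subst hwy
      rw [Function.update_of_ne hne, Equiv.swap_apply_left,
        Function.update_of_ne (Ne.symm hne), hy, hy']
    · rw [Function.update_of_ne hw, Equiv.swap_apply_of_ne_of_ne hwy hw,
        Function.update_of_ne hwy]

lemma scross_ge (lam : Fin l → ℕ) (hpos : ∀ i, 0 < lam i) (z : (Fin n → Fin l) → ℚ)
    {a b : Fin l} (hab : a ≠ b) :
    -((lam a : ℚ) * ∑ c ∈ tOm lam, z c ^ 2) ≤
      ∑ c ∈ tOm (lam : Fin l → ℕ),
        ∑ p ∈ Finset.univ.offDiag.filter (fun p : Fin n × Fin n => c p.1 = a ∧ c p.2 = b),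
          z c * z (tact (Equiv.swap p.1 p.2) c) := by
  classical
  set S := ∑ c ∈ tOm lam, z c ^ 2 with hS
  -- diagonal part
  have hD : ∑ c' ∈ tOm (tmu lam a b), ∑ y ∈ tfib c' b, z (Function.update c' y a) ^ 2
      = (lam a : ℚ) * S := by
    have h1 : ∑ c' ∈ tOm (tmu lam a b), ∑ y ∈ tfib c' b, z (Function.update c' y a) ^ 2
        = ∑ c ∈ tOm lam, ∑ x ∈ tfib c a, z c ^ 2 := by
      rw [Finset.sum_sigma' (tOm (tmu lam a b)) (fun c' => tfib c' b)
          (fun c' y => z (Function.update c' y a) ^ 2),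
        Finset.sum_sigma' (tOm lam) (fun c => tfib c a) (fun c _ => z c ^ 2)]
      apply Finset.sum_nbij' (i := fun q => ⟨Function.update q.1 q.2 a, q.2⟩)
        (j := fun q => ⟨Function.update q.1 q.2 b, q.2⟩)
      · rintro ⟨c', y⟩ hq
        dsimp only at hq ⊢
        rw [Finset.mem_sigma] at hq ⊢
        obtain ⟨h1, h2⟩ := hq
        rw [mem_tfib] at h2
        exact ⟨update_mem_tOm_fwd hab (hpos a) h1 h2, by simp [mem_tfib]⟩
      · rintro ⟨c, x⟩ hq
        dsimp only at hq ⊢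
        rw [Finset.mem_sigma] at hq ⊢
        obtain ⟨h1, h2⟩ := hq
        rw [mem_tfib] at h2
        exact ⟨update_mem_tOm_bwd hab h1 h2, by simp [mem_tfib]⟩
      · rintro ⟨c', y⟩ hq
        dsimp only at hq ⊢
        rw [Finset.mem_sigma] at hq
        obtain ⟨h1, h2⟩ := hq
        rw [mem_tfib] at h2
        simp only [Function.update_idem]
        have : Function.update c' y b = c' := by rw [← h2]; exact Function.update_eq_self y c'
        rw [this]
      · rintro ⟨c, x⟩ hq
        dsimp only at hq ⊢
        rw [Finset.mem_sigma] at hq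
        obtain ⟨h1, h2⟩ := hq
        rw [mem_tfib] at h2
        simp only [Function.update_idem]
        have : Function.update c x a = c := by rw [← h2]; exact Function.update_eq_self x c
        rw [this]
      · rintro ⟨c', y⟩ _; rfl
    rw [h1]
    have h2 : ∀ c ∈ tOm lam, ∑ x ∈ tfib c a, z c ^ 2 = (lam a : ℚ) * z c ^ 2 := by
      intro c hc
      rw [Finset.sum_const, (mem_tOm.1 hc) a, nsmul_eq_mul]
    rw [Finset.sum_congr rfl h2, ← Finset.mul_sum]
  -- off-diagonal part
  have hO : ∑ c' ∈ tOm (tmu lam a b), ∑ p ∈ (tfib c' b).offDiag,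
        z (Function.update c' p.1 a) * z (Function.update c' p.2 a)
      = ∑ c ∈ tOm lam,
          ∑ p ∈ Finset.univ.offDiag.filter (fun p : Fin n × Fin n => c p.1 = a ∧ c p.2 = b),
            z c * z (tact (Equiv.swap p.1 p.2) c) := by
    rw [Finset.sum_sigma' (tOm (tmu lam a b)) (fun c' => (tfib c' b).offDiag)
        (fun c' p => z (Function.update c' p.1 a) * z (Function.update c' p.2 a)),
      Finset.sum_sigma' (tOm lam)
        (fun c => Finset.univ.offDiag.filter (fun p : Fin n × Fin n => c p.1 = a ∧ c p.2 = b))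
        (fun c p => z c * z (tact (Equiv.swap p.1 p.2) c))]
    apply Finset.sum_nbij' (i := fun q => ⟨Function.update q.1 q.2.1 a, q.2⟩)
      (j := fun q => ⟨Function.update q.1 q.2.1 b, q.2⟩)
    · rintro ⟨c', ⟨y, y'⟩⟩ hq
      dsimp only at hq ⊢
      rw [Finset.mem_sigma] at hq ⊢
      obtain ⟨h1, h2⟩ := hq
      rw [Finset.mem_offDiag] at h2
      obtain ⟨hy, hy', hne⟩ := h2
      rw [mem_tfib] at hy hy'
      refine ⟨update_mem_tOm_fwd hab (hpos a) h1 hy, ?_⟩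
      rw [Finset.mem_filter]
      refine ⟨Finset.mem_offDiag.2 ⟨Finset.mem_univ _, Finset.mem_univ _, hne⟩, ?_, ?_⟩
      · exact Function.update_self y a c'
      · dsimp only
        rw [Function.update_of_ne (Ne.symm hne)]; exact hy'
    · rintro ⟨c, ⟨x, y⟩⟩ hq
      dsimp only at hq ⊢
      rw [Finset.mem_sigma] at hq ⊢
      obtain ⟨h1, h2⟩ := hq
      rw [Finset.mem_filter, Finset.mem_offDiag] at h2
      obtain ⟨⟨-, -, hne⟩, hx, hy⟩ := h2
      refine ⟨update_mem_tOm_bwd hab h1 hx, ?_⟩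
      rw [Finset.mem_offDiag]
      refine ⟨by simp [mem_tfib], ?_, hne⟩
      dsimp only
      rw [mem_tfib, Function.update_of_ne (Ne.symm hne)]
      exact hy
    · rintro ⟨c', ⟨y, y'⟩⟩ hq
      dsimp only at hq ⊢
      rw [Finset.mem_sigma] at hq
      obtain ⟨h1, h2⟩ := hq
      rw [Finset.mem_offDiag] at h2
      obtain ⟨hy, -, -⟩ := h2
      rw [mem_tfib] at hy
      simp only [Function.update_idem]
      have : Function.update c' y b = c' := by rw [← hy]; exact Function.update_eq_self y c'
      rw [this]
    · rintro ⟨c, ⟨x, y⟩⟩ hq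
      dsimp only at hq ⊢
      rw [Finset.mem_sigma] at hq
      obtain ⟨h1, h2⟩ := hq
      rw [Finset.mem_filter, Finset.mem_offDiag] at h2
      obtain ⟨⟨-, -, hne⟩, hx, hy⟩ := h2
      simp only [Function.update_idem]
      have : Function.update c x a = c := by rw [← hx]; exact Function.update_eq_self x c
      rw [this]
    · rintro ⟨c', ⟨y, y'⟩⟩ hq
      dsimp only at hq ⊢
      rw [Finset.mem_sigma] at hq
      obtain ⟨h1, h2⟩ := hq
      rw [Finset.mem_offDiag] at h2
      obtain ⟨hy, hy', hne⟩ := h2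
      rw [mem_tfib] at hy hy'
      have key : Function.update c' y' a = tact (Equiv.swap y y') (Function.update c' y a) :=
        update_eq_swap hy hy' hne
      rw [key]
  -- the square expansion
  have expand : ∑ c' ∈ tOm (tmu lam a b),
      (∑ y ∈ tfib c' b, z (Function.update c' y a)) ^ 2
      = (lam a : ℚ) * S
        + ∑ c ∈ tOm lam,
            ∑ p ∈ Finset.univ.offDiag.filter (fun p : Fin n × Fin n => c p.1 = a ∧ c p.2 = b),
              z c * z (tact (Equiv.swap p.1 p.2) c) := by
    rw [← hD, ← hO, ← Finset.sum_add_distrib]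
    apply Finset.sum_congr rfl
    intro c' _
    rw [sq, Finset.sum_mul_sum, ← Finset.sum_product', ← Finset.diag_union_offDiag,
      Finset.sum_union (Finset.disjoint_diag_offDiag _), sum_diag']
    congr 1
    apply Finset.sum_congr rfl
    intro y _
    rw [sq]
  have hsq : (0 : ℚ) ≤ ∑ c' ∈ tOm (tmu lam a b),
      (∑ y ∈ tfib c' b, z (Function.update c' y a)) ^ 2 :=
    Finset.sum_nonneg fun _ _ => sq_nonneg _
  rw [expand] at hsq
  linarith

lemma scross_symm (lam : Fin l → ℕ) (z : (Fin n → Fin l) → ℚ) (a b : Fin l) :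
    ∑ c ∈ tOm (lam : Fin l → ℕ),
        ∑ p ∈ Finset.univ.offDiag.filter (fun p : Fin n × Fin n => c p.1 = a ∧ c p.2 = b),
          z c * z (tact (Equiv.swap p.1 p.2) c)
      = ∑ c ∈ tOm lam,
        ∑ p ∈ Finset.univ.offDiag.filter (fun p : Fin n × Fin n => c p.1 = b ∧ c p.2 = a),
          z c * z (tact (Equiv.swap p.1 p.2) c) := by
  apply Finset.sum_congr rfl
  intro c _
  apply Finset.sum_nbij' (i := fun p => p.swap) (j := fun p => p.swap)
  · rintro ⟨x, y⟩ hp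
    rw [Finset.mem_filter, Finset.mem_offDiag] at hp ⊢
    obtain ⟨⟨-, -, hne⟩, hx, hy⟩ := hp
    exact ⟨⟨Finset.mem_univ _, Finset.mem_univ _, Ne.symm hne⟩, hy, hx⟩
  · rintro ⟨x, y⟩ hp
    rw [Finset.mem_filter, Finset.mem_offDiag] at hp ⊢
    obtain ⟨⟨-, -, hne⟩, hx, hy⟩ := hp
    exact ⟨⟨Finset.mem_univ _, Finset.mem_univ _, Ne.symm hne⟩, hy, hx⟩
  · intro p _; exact Prod.swap_swap p
  · intro p _; exact Prod.swap_swap p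
  · rintro ⟨x, y⟩ _
    simp only [Prod.swap_prod_mk]
    rw [Equiv.swap_comm]

lemma count_same (lam : Fin l → ℕ) {c : Fin n → Fin l} (hc : c ∈ tOm lam) :
    (Finset.univ.offDiag.filter fun p : Fin n × Fin n => c p.1 = c p.2).card
      = ∑ i, (lam i * lam i - lam i) := by
  have hset : Finset.univ.offDiag.filter (fun p : Fin n × Fin n => c p.1 = c p.2)
      = Finset.univ.biUnion (fun i : Fin l => (tfib c i).offDiag) := by
    ext p
    constructor
    · intro hp
      obtain ⟨hpo, heq⟩ := Finset.mem_filter.1 hp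
      have hne := (Finset.mem_offDiag.1 hpo).2.2
      exact Finset.mem_biUnion.2 ⟨c p.1, Finset.mem_univ _,
        Finset.mem_offDiag.2 ⟨mem_tfib.2 rfl, mem_tfib.2 heq.symm, hne⟩⟩
    · intro hp
      obtain ⟨i, -, hp⟩ := Finset.mem_biUnion.1 hp
      obtain ⟨h1, h2, hne⟩ := Finset.mem_offDiag.1 hp
      rw [mem_tfib] at h1 h2
      exact Finset.mem_filter.2
        ⟨Finset.mem_offDiag.2 ⟨Finset.mem_univ _, Finset.mem_univ _, hne⟩, h1.trans h2.symm⟩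
  rw [hset, Finset.card_biUnion]
  · apply Finset.sum_congr rfl
    intro i _
    rw [Finset.offDiag_card, (mem_tOm.1 hc) i]
  · intro i _ j _ hij
    show Disjoint (tfib c i).offDiag (tfib c j).offDiag
    rw [Finset.disjoint_left]
    intro p hp1 hp2
    rw [Finset.mem_offDiag] at hp1 hp2
    rw [mem_tfib] at *
    exact hij ((hp1.1).symm.trans hp2.1)

lemma count_max (lam : Fin l → ℕ) :
    ∑ q ∈ (Finset.univ : Finset (Fin l)).offDiag, lam (max q.1 q.2)
      = 2 * ∑ b : Fin l, (b : ℕ) * lam b := by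
  rw [← Finset.sum_filter_add_sum_filter_not (Finset.univ : Finset (Fin l)).offDiag
    (fun q => q.1 < q.2) (fun q => lam (max q.1 q.2))]
  have e2 : ∑ q ∈ Finset.univ.offDiag.filter (fun q : Fin l × Fin l => ¬ q.1 < q.2),
        lam (max q.1 q.2)
      = ∑ q ∈ Finset.univ.offDiag.filter (fun q : Fin l × Fin l => q.1 < q.2),
        lam (max q.1 q.2) := by
    apply Finset.sum_nbij' (i := fun q => q.swap) (j := fun q => q.swap)
    · rintro ⟨u, v⟩ hq
      rw [Finset.mem_filter, Finset.mem_offDiag] at hq ⊢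
      obtain ⟨⟨-, -, hne⟩, hnlt⟩ := hq
      exact ⟨⟨Finset.mem_univ _, Finset.mem_univ _, Ne.symm hne⟩,
        lt_of_le_of_ne (not_lt.1 hnlt) (Ne.symm hne)⟩
    · rintro ⟨u, v⟩ hq
      rw [Finset.mem_filter, Finset.mem_offDiag] at hq ⊢
      obtain ⟨⟨-, -, hne⟩, hlt⟩ := hq
      exact ⟨⟨Finset.mem_univ _, Finset.mem_univ _, Ne.symm hne⟩, not_lt.2 (le_of_lt hlt)⟩
    · intro q _; exact Prod.swap_swap q
    · intro q _; exact Prod.swap_swap q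
    · rintro ⟨u, v⟩ _
      dsimp only [Prod.swap_prod_mk]
      rw [max_comm]
  rw [e2, ← two_mul]
  congr 1
  have e1 : ∀ q ∈ Finset.univ.offDiag.filter (fun q : Fin l × Fin l => q.1 < q.2),
      lam (max q.1 q.2) = lam q.2 := fun q hq => by
    rw [max_eq_right (le_of_lt (Finset.mem_filter.1 hq).2)]
  rw [Finset.sum_congr rfl e1]
  have hst : Finset.univ.offDiag.filter (fun q : Fin l × Fin l => q.1 < q.2)
      = (Finset.univ ×ˢ Finset.univ).filter (fun q : Fin l × Fin l => q.1 < q.2) := by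
    ext q
    simp only [Finset.mem_filter, Finset.mem_offDiag, Finset.mem_univ, true_and,
      Finset.mem_product, and_iff_right_iff_imp]
    exact fun h => ne_of_lt h
  rw [hst, Finset.sum_filter, Finset.sum_product, Finset.sum_comm]
  apply Finset.sum_congr rfl
  intro b _
  dsimp only
  rw [← Finset.sum_filter (fun a : Fin l => a < b) (fun _ => lam b), Finset.sum_const]
  have : Finset.univ.filter (fun a : Fin l => a < b) = Finset.Iio b := by
    ext a; simp
  rw [this, Fin.card_Iio, smul_eq_mul]

/-- The set of transpositions, as a `Finset`. -/
noncomputable def tTF (n : ℕ) : Finset (Equiv.Perm (Fin n)) :=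
  Finset.univ.filter fun t => t.IsSwap

lemma mem_tTF {t : Equiv.Perm (Fin n)} : t ∈ tTF n ↔ t.IsSwap := by simp [tTF]

lemma swap_fiber_card {t : Equiv.Perm (Fin n)} (ht : t.IsSwap) :
    (Finset.univ.offDiag.filter fun p : Fin n × Fin n => Equiv.swap p.1 p.2 = t).card = 2 := by
  obtain ⟨x, y, hxy, rfl⟩ := ht
  have hset : (Finset.univ.offDiag.filter
        fun p : Fin n × Fin n => Equiv.swap p.1 p.2 = Equiv.swap x y)
      = {(x, y), (y, x)} := by
    ext p
    simp only [Finset.mem_filter, Finset.mem_offDiag, Finset.mem_univ, true_and,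
      Finset.mem_insert, Finset.mem_singleton]
    constructor
    · rintro ⟨hne, hsw⟩
      have happ : Equiv.swap x y p.1 = p.2 := by
        rw [← hsw, Equiv.swap_apply_left]
      by_cases h1 : p.1 = x
      · left
        have h2 : p.2 = y := by rw [← happ, h1, Equiv.swap_apply_left]
        exact Prod.ext h1 h2
      · by_cases h2 : p.1 = y
        · right
          have h3 : p.2 = x := by rw [← happ, h2, Equiv.swap_apply_right]
          exact Prod.ext h2 h3
        · exfalso
          rw [Equiv.swap_apply_of_ne_of_ne h1 h2] at happ
          exact hne happ
    · rintro (rfl | rfl)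
      · exact ⟨hxy, rfl⟩
      · exact ⟨Ne.symm hxy, Equiv.swap_comm y x⟩
  rw [hset, Finset.card_insert_of_notMem, Finset.card_singleton]
  simp only [Finset.mem_singleton, Prod.mk.injEq, not_and]
  exact fun h _ => hxy h

lemma sum_offDiag_swap (F : Equiv.Perm (Fin n) → ℚ) :
    ∑ p ∈ (Finset.univ : Finset (Fin n)).offDiag, F (Equiv.swap p.1 p.2)
      = 2 * ∑ t ∈ tTF n, F t := by
  have hmaps : ∀ p ∈ (Finset.univ : Finset (Fin n)).offDiag,
      (fun p : Fin n × Fin n => Equiv.swap p.1 p.2) p ∈ tTF n := by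
    intro p hp
    rw [mem_tTF]
    exact ⟨p.1, p.2, (Finset.mem_offDiag.1 hp).2.2, rfl⟩
  rw [← Finset.sum_fiberwise_of_maps_to hmaps (fun p : Fin n × Fin n => F (Equiv.swap p.1 p.2)),
    Finset.mul_sum]
  apply Finset.sum_congr rfl
  intro t ht
  have hcongr : ∀ p ∈ Finset.univ.offDiag.filter
      (fun p : Fin n × Fin n => Equiv.swap p.1 p.2 = t),
      F (Equiv.swap p.1 p.2) = F t := fun p hp => by rw [(Finset.mem_filter.1 hp).2]
  rw [Finset.sum_congr rfl hcongr, Finset.sum_const, swap_fiber_card (mem_tTF.1 ht),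
    nsmul_eq_mul]
  norm_num

lemma tact_swap_same {c : Fin n → Fin l} {x y : Fin n} (h : c x = c y) :
    tact (Equiv.swap x y) c = c := by
  funext w
  rw [tact_apply, Equiv.swap_inv]
  by_cases hx : w = x
  · rw [hx, Equiv.swap_apply_left, ← h]
  · by_cases hy : w = y
    · rw [hy, Equiv.swap_apply_right, h]
    · rw [Equiv.swap_apply_of_ne_of_ne hx hy]

/-- The master positivity lemma: if the transposition-sum quadratic form vanishes on `z`
(restricted to `tOm lam`) and the content sum is positive, then `z` vanishes on `tOm lam`. -/
lemma z_eq_zero (lam : Fin l → ℕ) (hpos : ∀ i, 0 < lam i)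
    (hcontent : 0 < ∑ i : Fin l,
      (lam i : ℤ) * ((lam i : ℤ) - 2 * (((i : ℕ) : ℤ) + 1) + 1))
    (z : (Fin n → Fin l) → ℚ)
    (hE : ∑ c ∈ tOm (lam : Fin l → ℕ), ∑ t ∈ tTF n, z c * z (tact t c) = 0) :
    ∀ c ∈ tOm lam, z c = 0 := by
  classical
  set S := ∑ c ∈ tOm lam, z c ^ 2 with hS
  have hSnn : 0 ≤ S := Finset.sum_nonneg fun _ _ => sq_nonneg _
  -- double sum over ordered pairs
  have hE2 : ∑ c ∈ tOm (lam : Fin l → ℕ), ∑ p ∈ (Finset.univ : Finset (Fin n)).offDiag,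
      z c * z (tact (Equiv.swap p.1 p.2) c) = 0 := by
    have : ∀ c ∈ tOm (lam : Fin l → ℕ),
        ∑ p ∈ (Finset.univ : Finset (Fin n)).offDiag, z c * z (tact (Equiv.swap p.1 p.2) c)
          = 2 * ∑ t ∈ tTF n, z c * z (tact t c) := fun c _ =>
      sum_offDiag_swap (fun t => z c * z (tact t c))
    rw [Finset.sum_congr rfl this, ← Finset.mul_sum, hE, mul_zero]
  -- split into same-color and cross-color parts
  have hsplit : ∀ c ∈ tOm (lam : Fin l → ℕ),
      ∑ p ∈ (Finset.univ : Finset (Fin n)).offDiag, z c * z (tact (Equiv.swap p.1 p.2) c)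
        = (∑ i, (lam i * lam i - lam i) : ℕ) * z c ^ 2
          + ∑ p ∈ Finset.univ.offDiag.filter (fun p : Fin n × Fin n => ¬ c p.1 = c p.2),
              z c * z (tact (Equiv.swap p.1 p.2) c) := by
    intro c hc
    rw [← Finset.sum_filter_add_sum_filter_not (Finset.univ : Finset (Fin n)).offDiag
      (fun p => c p.1 = c p.2) (fun p => z c * z (tact (Equiv.swap p.1 p.2) c))]
    congr 1
    have heq : ∀ p ∈ Finset.univ.offDiag.filter (fun p : Fin n × Fin n => c p.1 = c p.2),
        z c * z (tact (Equiv.swap p.1 p.2) c) = z c ^ 2 := by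
      intro p hp
      rw [tact_swap_same (Finset.mem_filter.1 hp).2, sq]
    rw [Finset.sum_congr rfl heq, Finset.sum_const, count_same lam hc, nsmul_eq_mul]
  -- cross part organized by color pairs
  have hcross : ∑ c ∈ tOm (lam : Fin l → ℕ),
      ∑ p ∈ Finset.univ.offDiag.filter (fun p : Fin n × Fin n => ¬ c p.1 = c p.2),
          z c * z (tact (Equiv.swap p.1 p.2) c)
      = ∑ q ∈ (Finset.univ : Finset (Fin l)).offDiag, ∑ c ∈ tOm (lam : Fin l → ℕ),
          ∑ p ∈ Finset.univ.offDiag.filter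
            (fun p : Fin n × Fin n => c p.1 = q.1 ∧ c p.2 = q.2),
            z c * z (tact (Equiv.swap p.1 p.2) c) := by
    have hBc : ∀ c ∈ tOm (lam : Fin l → ℕ),
        ∑ p ∈ Finset.univ.offDiag.filter (fun p : Fin n × Fin n => ¬ c p.1 = c p.2),
            z c * z (tact (Equiv.swap p.1 p.2) c)
          = ∑ q ∈ (Finset.univ : Finset (Fin l)).offDiag,
              ∑ p ∈ Finset.univ.offDiag.filter
                (fun p : Fin n × Fin n => c p.1 = q.1 ∧ c p.2 = q.2),
                z c * z (tact (Equiv.swap p.1 p.2) c) := by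
      intro c _
      have hmaps : ∀ p ∈ Finset.univ.offDiag.filter
          (fun p : Fin n × Fin n => ¬ c p.1 = c p.2),
          (fun p : Fin n × Fin n => (c p.1, c p.2)) p
            ∈ (Finset.univ : Finset (Fin l)).offDiag := by
        intro p hp
        obtain ⟨-, hne⟩ := Finset.mem_filter.1 hp
        exact Finset.mem_offDiag.2 ⟨Finset.mem_univ _, Finset.mem_univ _, hne⟩
      rw [← Finset.sum_fiberwise_of_maps_to hmaps
        (fun p : Fin n × Fin n => z c * z (tact (Equiv.swap p.1 p.2) c))]
      apply Finset.sum_congr rfl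
      intro q hq
      congr 1
      rw [Finset.filter_filter]
      ext p
      simp only [Finset.mem_filter]
      constructor
      · rintro ⟨hpo, -, hpq⟩
        exact ⟨hpo, congrArg Prod.fst hpq, congrArg Prod.snd hpq⟩
      · rintro ⟨hpo, h1, h2⟩
        have hne : q.1 ≠ q.2 := (Finset.mem_offDiag.1 hq).2.2
        exact ⟨hpo, by rw [h1, h2]; exact hne, Prod.ext h1 h2⟩
    rw [Finset.sum_congr rfl hBc, Finset.sum_comm]
  -- per-pair lower bound
  have hbound : ∀ q ∈ (Finset.univ : Finset (Fin l)).offDiag,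
      -((lam (max q.1 q.2) : ℚ) * S) ≤ ∑ c ∈ tOm (lam : Fin l → ℕ),
          ∑ p ∈ Finset.univ.offDiag.filter
            (fun p : Fin n × Fin n => c p.1 = q.1 ∧ c p.2 = q.2),
            z c * z (tact (Equiv.swap p.1 p.2) c) := by
    intro q hq
    have hne : q.1 ≠ q.2 := (Finset.mem_offDiag.1 hq).2.2
    rcases le_total q.1 q.2 with h | h
    · rw [max_eq_right h, scross_symm lam z q.1 q.2]
      exact scross_ge lam hpos z (Ne.symm hne)
    · rw [max_eq_left h]
      exact scross_ge lam hpos z hne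
  -- assemble
  have hE2' : (↑(∑ i, (lam i * lam i - lam i)) : ℚ) * S
      + ∑ q ∈ (Finset.univ : Finset (Fin l)).offDiag, ∑ c ∈ tOm (lam : Fin l → ℕ),
          ∑ p ∈ Finset.univ.offDiag.filter
            (fun p : Fin n × Fin n => c p.1 = q.1 ∧ c p.2 = q.2),
            z c * z (tact (Equiv.swap p.1 p.2) c) = 0 := by
    have h0 : ∑ c ∈ tOm (lam : Fin l → ℕ),
        ((↑(∑ i, (lam i * lam i - lam i)) : ℚ) * z c ^ 2
          + ∑ p ∈ Finset.univ.offDiag.filter (fun p : Fin n × Fin n => ¬ c p.1 = c p.2),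
              z c * z (tact (Equiv.swap p.1 p.2) c)) = 0 := by
      rw [← Finset.sum_congr rfl hsplit]
      exact hE2
    rw [Finset.sum_add_distrib, ← Finset.mul_sum, hcross] at h0
    exact h0
  have hcm : ∑ q ∈ (Finset.univ : Finset (Fin l)).offDiag, ((lam (max q.1 q.2) : ℚ))
      = 2 * ∑ b : Fin l, ((b : ℕ) : ℚ) * lam b := by
    exact_mod_cast count_max lam
  have hsum_bound : -((2 * ∑ b : Fin l, ((b : ℕ) : ℚ) * lam b) * S)
      ≤ ∑ q ∈ (Finset.univ : Finset (Fin l)).offDiag, ∑ c ∈ tOm (lam : Fin l → ℕ),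
          ∑ p ∈ Finset.univ.offDiag.filter
            (fun p : Fin n × Fin n => c p.1 = q.1 ∧ c p.2 = q.2),
            z c * z (tact (Equiv.swap p.1 p.2) c) := by
    have h1 := Finset.sum_le_sum hbound
    have h2 : ∑ q ∈ (Finset.univ : Finset (Fin l)).offDiag, -((lam (max q.1 q.2) : ℚ) * S)
        = -((2 * ∑ b : Fin l, ((b : ℕ) : ℚ) * lam b) * S) := by
      rw [Finset.sum_neg_distrib, ← Finset.sum_mul, hcm]
    rw [h2] at h1
    exact h1
  -- the content sum is positive
  have hKpos : (0 : ℚ) < (↑(∑ i, (lam i * lam i - lam i)) : ℚ)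
      - 2 * ∑ b : Fin l, ((b : ℕ) : ℚ) * lam b := by
    have h1 : (↑(∑ i, (lam i * lam i - lam i)) : ℚ)
        = ∑ i : Fin l, ((lam i : ℚ) * lam i - lam i) := by
      rw [Nat.cast_sum]
      apply Finset.sum_congr rfl
      intro i _
      rw [Nat.cast_sub (Nat.le_mul_of_pos_left _ (hpos i)), Nat.cast_mul]
    have h2 : (0 : ℚ) < ∑ i : Fin l,
        (lam i : ℚ) * ((lam i : ℚ) - 2 * (((i : ℕ) : ℚ) + 1) + 1) := by
      exact_mod_cast hcontent
    have h3 : ∑ i : Fin l, (lam i : ℚ) * ((lam i : ℚ) - 2 * (((i : ℕ) : ℚ) + 1) + 1)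
        = (∑ i : Fin l, ((lam i : ℚ) * lam i - lam i))
          - 2 * ∑ b : Fin l, ((b : ℕ) : ℚ) * lam b := by
      rw [Finset.mul_sum, ← Finset.sum_sub_distrib]
      apply Finset.sum_congr rfl
      intro i _
      ring
    rw [h3] at h2
    rw [h1]
    linarith
  have hS0 : S = 0 := by nlinarith [hKpos, hSnn, hE2', hsum_bound]
  intro c hc
  have hz2 : z c ^ 2 = 0 := by
    have hzero := (Finset.sum_eq_zero_iff_of_nonneg
      (fun c (_ : c ∈ tOm (lam : Fin l → ℕ)) => sq_nonneg (z c))).1 (hS ▸ hS0)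
    exact hzero c hc
  exact (pow_eq_zero_iff (two_ne_zero)).1 hz2

section Tiling

variable {Y : Set (Equiv.Perm (Fin n))}

/-- `Y` as a `Finset`. -/
noncomputable def tYF (Y : Set (Equiv.Perm (Fin n))) : Finset (Equiv.Perm (Fin n)) :=
  Finset.univ.filter fun y => y ∈ Y

lemma mem_tYF {y : Equiv.Perm (Fin n)} : y ∈ tYF Y ↔ y ∈ Y := by simp [tYF]

/-- The number of `y ∈ Y` with `tact y P = R`. -/
noncomputable def tN (Y : Set (Equiv.Perm (Fin n))) (P R : Fin n → Fin l) : ℕ :=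
  ((tYF Y).filter fun y => tact y P = R).card

noncomputable def ta (R Q : Fin n → Fin l) : ℕ :=
  ((tTF n).filter fun t => tact t R = Q).card

noncomputable def tm (P Q : Fin n → Fin l) : ℕ :=
  ((Finset.univ : Finset (Equiv.Perm (Fin n))).filter fun g => tact g P = Q).card

lemma isSwap_sq {t : Equiv.Perm (Fin n)} (ht : t.IsSwap) : t * t = 1 := by
  obtain ⟨x, y, -, rfl⟩ := ht
  exact Equiv.swap_mul_self x y

lemma card_mul_card (hT : IsTiling (transpositions n) Y) :
    (tTF n).card * (tYF Y).card = Fintype.card (Equiv.Perm (Fin n)) := by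
  rw [← Finset.card_product, ← Finset.card_univ]
  apply Finset.card_bij (i := fun p _ => p.1 * p.2)
  · intro p _; exact Finset.mem_univ _
  · intro p hp p' hp' heq
    obtain ⟨u, -, huniq⟩ := hT (p.1 * p.2)
    rw [Finset.mem_product] at hp hp'
    have h1 : p = u := huniq p ⟨mem_tTF.1 hp.1, mem_tYF.1 hp.2, rfl⟩
    have h2 : p' = u := huniq p' ⟨mem_tTF.1 hp'.1, mem_tYF.1 hp'.2, heq.symm⟩
    rw [h1, h2]
  · intro g _
    obtain ⟨⟨t, y⟩, ⟨ht, hy, hg⟩, -⟩ := hT g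
    exact ⟨(t, y), Finset.mem_product.2 ⟨mem_tTF.2 ht, mem_tYF.2 hy⟩, hg⟩

lemma tm_eq_sum (hT : IsTiling (transpositions n) Y) {lam : Fin l → ℕ}
    {P : Fin n → Fin l} (hP : P ∈ tOm lam) (Q : Fin n → Fin l) :
    (tm P Q : ℚ) = ∑ R ∈ tOm (lam : Fin l → ℕ), (tN Y P R : ℚ) * (ta R Q : ℚ) := by
  have h1 : ((tTF n ×ˢ tYF Y).filter
      fun p : Equiv.Perm (Fin n) × Equiv.Perm (Fin n) => tact p.1 (tact p.2 P) = Q).card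
        = tm P Q := by
    apply Finset.card_bij (i := fun p _ => p.1 * p.2)
    · intro p hp
      rw [Finset.mem_filter] at hp
      exact Finset.mem_filter.2 ⟨Finset.mem_univ _, by rw [tact_mul]; exact hp.2⟩
    · intro p hp p' hp' heq
      obtain ⟨u, -, huniq⟩ := hT (p.1 * p.2)
      rw [Finset.mem_filter, Finset.mem_product] at hp hp'
      have h1 : p = u := huniq p ⟨mem_tTF.1 hp.1.1, mem_tYF.1 hp.1.2, rfl⟩
      have h2 : p' = u := huniq p' ⟨mem_tTF.1 hp'.1.1, mem_tYF.1 hp'.1.2, heq.symm⟩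
      rw [h1, h2]
    · intro g hg
      obtain ⟨⟨t, y⟩, ⟨ht, hy, hgty⟩, -⟩ := hT g
      refine ⟨(t, y), Finset.mem_filter.2
        ⟨Finset.mem_product.2 ⟨mem_tTF.2 ht, mem_tYF.2 hy⟩, ?_⟩, hgty⟩
      have hgoal : tact g P = Q := (Finset.mem_filter.1 hg).2
      rw [← tact_mul, hgty]
      exact hgoal
  calc (tm P Q : ℚ)
      = ∑ p ∈ tTF n ×ˢ tYF Y,
          if tact p.1 (tact p.2 P) = Q then (1 : ℚ) else 0 := by
        rw [← h1, Finset.card_filter, Nat.cast_sum]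
        apply Finset.sum_congr rfl
        intro p _
        split <;> simp
    _ = ∑ y ∈ tYF Y, ∑ t ∈ tTF n, if tact t (tact y P) = Q then (1 : ℚ) else 0 := by
        rw [Finset.sum_product]
        exact Finset.sum_comm
    _ = ∑ y ∈ tYF Y, (ta (tact y P) Q : ℚ) := by
        apply Finset.sum_congr rfl
        intro y _
        rw [ta, Finset.card_filter, Nat.cast_sum]
        apply Finset.sum_congr rfl
        intro t _
        split <;> simp
    _ = ∑ R ∈ tOm (lam : Fin l → ℕ), ∑ y ∈ (tYF Y).filter (fun y => tact y P = R),
          (ta (tact y P) Q : ℚ) := by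
        rw [Finset.sum_fiberwise_of_maps_to (fun y _ => tact_mem_tOm hP y)]
    _ = ∑ R ∈ tOm (lam : Fin l → ℕ), (tN Y P R : ℚ) * (ta R Q : ℚ) := by
        apply Finset.sum_congr rfl
        intro R hR
        have hcongr : ∀ y ∈ (tYF Y).filter (fun y => tact y P = R),
            (ta (tact y P) Q : ℚ) = (ta R Q : ℚ) := fun y hy => by
          rw [(Finset.mem_filter.1 hy).2]
        rw [Finset.sum_congr rfl hcongr, Finset.sum_const, nsmul_eq_mul, tN]

lemma exists_act {lam : Fin l → ℕ} {Q Q' : Fin n → Fin l} (hQ : Q ∈ tOm lam)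
    (hQ' : Q' ∈ tOm lam) : ∃ σ : Equiv.Perm (Fin n), tact σ Q = Q' := by
  have hcard : ∀ i, Fintype.card {x // Q x = i} = Fintype.card {x // Q' x = i} := by
    intro i
    rw [Fintype.card_subtype, Fintype.card_subtype]
    have h1 := (mem_tOm.1 hQ) i
    have h2 := (mem_tOm.1 hQ') i
    rw [tfib] at h1 h2
    rw [h1, h2]
  let e : ∀ i, {x // Q x = i} ≃ {x // Q' x = i} := fun i => Fintype.equivOfCardEq (hcard i)
  let σ : Equiv.Perm (Fin n) := (Equiv.sigmaFiberEquiv Q).symm.trans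
    ((Equiv.sigmaCongrRight e).trans (Equiv.sigmaFiberEquiv Q'))
  have key : ∀ x, Q' (σ x) = Q x := fun x => (e (Q x) ⟨x, rfl⟩).2
  refine ⟨σ, ?_⟩
  funext x
  rw [tact_apply, ← key (σ⁻¹ x), ← Equiv.Perm.mul_apply, mul_inv_cancel, Equiv.Perm.one_apply]

lemma tm_const {lam : Fin l → ℕ} {P Q Q' : Fin n → Fin l} (hQ : Q ∈ tOm lam)
    (hQ' : Q' ∈ tOm lam) : tm P Q = tm P Q' := by
  obtain ⟨σ, hσ⟩ := exists_act hQ hQ'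
  apply Finset.card_bij' (i := fun g _ => σ * g) (j := fun g _ => σ⁻¹ * g)
  · intro g hg
    rw [Finset.mem_filter] at hg ⊢
    exact ⟨Finset.mem_univ _, by rw [tact_mul, hg.2, hσ]⟩
  · intro g hg
    rw [Finset.mem_filter] at hg ⊢
    refine ⟨Finset.mem_univ _, ?_⟩
    rw [tact_mul, hg.2, ← hσ, tact_inv_tact]
  · intro g _
    rw [← mul_assoc, inv_mul_cancel, one_mul]
  · intro g _
    rw [← mul_assoc, mul_inv_cancel, one_mul]

lemma tm_mul_card {lam : Fin l → ℕ} {P Q : Fin n → Fin l} (hP : P ∈ tOm lam)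
    (hQ : Q ∈ tOm lam) :
    (tOm lam : Finset (Fin n → Fin l)).card * tm P Q = Fintype.card (Equiv.Perm (Fin n)) := by
  have h1 : ∑ Q' ∈ tOm (lam : Fin l → ℕ), tm P Q' = Fintype.card (Equiv.Perm (Fin n)) := by
    rw [← Finset.card_univ, Finset.card_eq_sum_card_fiberwise
      (f := fun g => tact g P) (t := tOm lam) (fun g _ => tact_mem_tOm hP g)]
    rfl
  rw [← h1, Finset.sum_congr rfl (fun Q' hQ' => tm_const hQ' hQ), Finset.sum_const,
    smul_eq_mul]

lemma ta_sum {lam : Fin l → ℕ} {Q : Fin n → Fin l} (hQ : Q ∈ tOm lam) :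
    ∑ R ∈ tOm (lam : Fin l → ℕ), (ta R Q : ℚ) = (tTF n).card := by
  have h : ∀ R, (ta R Q : ℚ) = ∑ t ∈ tTF n, if tact t R = Q then (1 : ℚ) else 0 := by
    intro R
    rw [ta, Finset.card_filter, Nat.cast_sum]
    apply Finset.sum_congr rfl
    intro t _
    split <;> simp
  rw [Finset.sum_congr rfl (fun R _ => h R), Finset.sum_comm]
  have h2 : ∀ t ∈ tTF n,
      ∑ R ∈ tOm (lam : Fin l → ℕ), (if tact t R = Q then (1 : ℚ) else 0) = 1 := by
    intro t ht
    have hiff : ∀ R : Fin n → Fin l, tact t R = Q ↔ R = tact t⁻¹ Q := by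
      intro R
      constructor
      · intro h'; rw [← h', tact_inv_tact]
      · intro h'; rw [h', tact_tact_inv]
    have hre : ∀ R ∈ tOm (lam : Fin l → ℕ),
        (if tact t R = Q then (1 : ℚ) else 0) = (if R = tact t⁻¹ Q then (1 : ℚ) else 0) := by
      intro R _
      rw [if_congr (hiff R) rfl rfl]
    rw [Finset.sum_congr rfl hre, Finset.sum_ite_eq' (tOm lam) (tact t⁻¹ Q) (fun _ => (1 : ℚ)),
      if_pos (tact_mem_tOm hQ t⁻¹)]
  rw [Finset.sum_congr rfl h2, Finset.sum_const, nsmul_eq_mul, mul_one]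

lemma ta_symm (R Q : Fin n → Fin l) : ta R Q = ta Q R := by
  have key : ∀ (A B : Fin n → Fin l) (t : Equiv.Perm (Fin n)), t.IsSwap →
      tact t A = B → tact t B = A := by
    intro A B t ht h
    rw [← h, ← tact_mul, isSwap_sq ht, tact_one]
  unfold ta
  congr 1
  ext t
  simp only [Finset.mem_filter, mem_tTF]
  constructor
  · rintro ⟨ht, heq⟩
    exact ⟨ht, key R Q t ht heq⟩
  · rintro ⟨ht, heq⟩
    exact ⟨ht, key Q R t ht heq⟩

lemma quadform_zero (hT : IsTiling (transpositions n) Y) {lam : Fin l → ℕ}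
    {P : Fin n → Fin l} (hP : P ∈ tOm lam) :
    ∑ c ∈ tOm (lam : Fin l → ℕ), ∑ t ∈ tTF n,
        ((((tOm lam : Finset (Fin n → Fin l)).card : ℚ) * tN Y P c - (tYF Y).card)
          * (((tOm lam : Finset (Fin n → Fin l)).card : ℚ) * tN Y P (tact t c) - (tYF Y).card)) = 0 := by
  set z : (Fin n → Fin l) → ℚ :=
    fun R => ((tOm lam : Finset (Fin n → Fin l)).card : ℚ) * tN Y P R - (tYF Y).card with hz
  have h5 : ∀ Q ∈ tOm (lam : Fin l → ℕ),
      ∑ R ∈ tOm (lam : Fin l → ℕ), (ta R Q : ℚ) * z R = 0 := by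
    intro Q hQ
    have hexp : ∑ R ∈ tOm (lam : Fin l → ℕ), (ta R Q : ℚ) * z R
        = ((tOm lam : Finset (Fin n → Fin l)).card : ℚ)
            * (∑ R ∈ tOm (lam : Fin l → ℕ), (tN Y P R : ℚ) * (ta R Q : ℚ))
          - ((tYF Y).card : ℚ) * ∑ R ∈ tOm (lam : Fin l → ℕ), (ta R Q : ℚ) := by
      rw [Finset.mul_sum, Finset.mul_sum, ← Finset.sum_sub_distrib]
      apply Finset.sum_congr rfl
      intro R _
      rw [hz]
      ring
    rw [hexp, ← tm_eq_sum hT hP Q, ta_sum hQ]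
    have h4 := tm_mul_card hP hQ
    have h1 := card_mul_card hT
    have e4 : ((tOm lam : Finset (Fin n → Fin l)).card : ℚ) * (tm P Q : ℚ)
        = (Fintype.card (Equiv.Perm (Fin n)) : ℚ) := by exact_mod_cast h4
    have e1 : ((tYF Y).card : ℚ) * ((tTF n).card : ℚ)
        = (Fintype.card (Equiv.Perm (Fin n)) : ℚ) := by
      rw [mul_comm]; exact_mod_cast h1
    linarith
  have h6 : ∀ c ∈ tOm (lam : Fin l → ℕ), ∑ t ∈ tTF n, z (tact t c)
      = ∑ R ∈ tOm (lam : Fin l → ℕ), (ta c R : ℚ) * z R := by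
    intro c hc
    rw [← Finset.sum_fiberwise_of_maps_to (g := fun t => tact t c) (t := tOm lam)
      (fun t _ => tact_mem_tOm hc t) (fun t => z (tact t c))]
    apply Finset.sum_congr rfl
    intro R hR
    have hcongr : ∀ t ∈ (tTF n).filter (fun t => tact t c = R), z (tact t c) = z R :=
      fun t ht => by rw [(Finset.mem_filter.1 ht).2]
    rw [Finset.sum_congr rfl hcongr, Finset.sum_const, nsmul_eq_mul, ta]
  calc ∑ c ∈ tOm (lam : Fin l → ℕ), ∑ t ∈ tTF n, z c * z (tact t c)
      = ∑ c ∈ tOm (lam : Fin l → ℕ), z c * ∑ t ∈ tTF n, z (tact t c) := by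
        apply Finset.sum_congr rfl
        intro c _
        rw [Finset.mul_sum]
    _ = ∑ c ∈ tOm (lam : Fin l → ℕ), z c * ∑ R ∈ tOm (lam : Fin l → ℕ), (ta R c : ℚ) * z R := by
        apply Finset.sum_congr rfl
        intro c hc
        rw [h6 c hc]
        congr 1
        apply Finset.sum_congr rfl
        intro R _
        rw [ta_symm]
    _ = 0 := by
        apply Finset.sum_eq_zero
        intro c hc
        rw [h5 c hc, mul_zero]

lemma main_count (hT : IsTiling (transpositions n) Y) {lam : Fin l → ℕ}
    (hpos : ∀ i, 0 < lam i)
    (hcontent : 0 < ∑ i : Fin l,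
      (lam i : ℤ) * ((lam i : ℤ) - 2 * (((i : ℕ) : ℤ) + 1) + 1))
    {P R : Fin n → Fin l} (hP : P ∈ tOm lam) (hR : R ∈ tOm lam) :
    (tOm lam : Finset (Fin n → Fin l)).card * tN Y P R = (tYF Y).card := by
  have hz := z_eq_zero lam hpos hcontent
    (fun R => ((tOm lam : Finset (Fin n → Fin l)).card : ℚ) * tN Y P R - (tYF Y).card)
    (quadform_zero hT hP) R hR
  have hq : ((tOm lam : Finset (Fin n → Fin l)).card : ℚ) * (tN Y P R : ℚ) = ((tYF Y).card : ℚ) := by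
    linarith
  exact_mod_cast hq

end Tiling

lemma tOm_nonempty (lam : Fin l → ℕ) (hsum : ∑ i, lam i = n) :
    ∃ c : Fin n → Fin l, c ∈ tOm lam := by
  have hcard : Fintype.card (Σ i : Fin l, Fin (lam i)) = Fintype.card (Fin n) := by
    simp [Fintype.card_sigma, hsum]
  let σ : (Σ i : Fin l, Fin (lam i)) ≃ Fin n := Fintype.equivOfCardEq hcard
  refine ⟨fun x => (σ.symm x).1, ?_⟩
  rw [mem_tOm]
  intro i
  have h1 : (tfib (fun x => (σ.symm x).1) i).card
      = Fintype.card {x : Fin n // (σ.symm x).1 = i} := by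
    rw [Fintype.card_subtype]
    rfl
  have e1 : {x : Fin n // (σ.symm x).1 = i} ≃ {p : Σ k : Fin l, Fin (lam k) // p.1 = i} :=
    σ.symm.subtypeEquiv (fun x => Iff.rfl)
  have e2 : {p : Σ k : Fin l, Fin (lam k) // p.1 = i} ≃ Fin (lam i) :=
    { toFun := fun p => Fin.cast (congrArg lam p.2) p.1.2
      invFun := fun v => ⟨⟨i, v⟩, rfl⟩
      left_inv := by
        rintro ⟨⟨k, v⟩, hk⟩
        dsimp only at hk
        subst hk
        rfl
      right_inv := fun v => rfl }
  rw [h1, Fintype.card_congr (e1.trans e2), Fintype.card_fin]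

end TTProof

open TTProof in
theorem lambda_transitive_of_transposition_tiling (n : ℕ) (hn : 2 ≤ n)
    (Y : Set (Equiv.Perm (Fin n))) (hT : IsTiling (transpositions n) Y)
    (l : ℕ) (lam : Fin l → ℕ)
    (hmono : ∀ i j : Fin l, i ≤ j → lam j ≤ lam i)
    (hpos : ∀ i, 0 < lam i)
    (hsum : ∑ i, lam i = n)
    (hcontent : 0 < ∑ i : Fin l,
      (lam i : ℤ) * ((lam i : ℤ) - 2 * (((i : ℕ) : ℤ) + 1) + 1)) :
    ∃ r : ℕ, 0 < r ∧
      ∀ P Q : Fin l → Finset (Fin n),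
        (∀ i, (P i).card = lam i) → (∀ i, (Q i).card = lam i) →
        (∀ i j, i ≠ j → Disjoint (P i) (P j)) →
        (∀ i j, i ≠ j → Disjoint (Q i) (Q j)) →
        Finset.univ.biUnion P = Finset.univ →
        Finset.univ.biUnion Q = Finset.univ →
        {y ∈ Y | ∀ i, (P i).image (⇑y) = Q i}.ncard = r := by
  classical
  obtain ⟨c₀, hc₀⟩ := tOm_nonempty lam hsum
  have hYpos : 0 < (tYF Y).card := by
    obtain ⟨⟨t, y⟩, ⟨-, hy, -⟩, -⟩ := hT 1
    exact Finset.card_pos.2 ⟨y, mem_tYF.2 hy⟩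
  have hOmpos : 0 < (tOm lam : Finset (Fin n → Fin l)).card := Finset.card_pos.2 ⟨c₀, hc₀⟩
  have hbase := main_count hT hpos hcontent hc₀ hc₀
  refine ⟨tN Y c₀ c₀, ?_, ?_⟩
  · rcases Nat.eq_zero_or_pos (tN Y c₀ c₀) with h0 | h0
    · rw [h0, mul_zero] at hbase
      omega
    · exact h0
  · intro P Q hPc hQc hPd hQd hPcov hQcov
    -- the coloring associated to P
    have hexP : ∀ x : Fin n, ∃ i, x ∈ P i := by
      intro x
      have hx : x ∈ Finset.univ.biUnion P := by rw [hPcov]; exact Finset.mem_univ x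
      obtain ⟨i, -, hi⟩ := Finset.mem_biUnion.1 hx
      exact ⟨i, hi⟩
    have hexQ : ∀ x : Fin n, ∃ i, x ∈ Q i := by
      intro x
      have hx : x ∈ Finset.univ.biUnion Q := by rw [hQcov]; exact Finset.mem_univ x
      obtain ⟨i, -, hi⟩ := Finset.mem_biUnion.1 hx
      exact ⟨i, hi⟩
    set cP : Fin n → Fin l := fun x => (hexP x).choose with hcPdef
    set cQ : Fin n → Fin l := fun x => (hexQ x).choose with hcQdef
    have hcPmem : ∀ x, x ∈ P (cP x) := fun x => (hexP x).choose_spec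
    have hcQmem : ∀ x, x ∈ Q (cQ x) := fun x => (hexQ x).choose_spec
    have hcPuniq : ∀ x i, x ∈ P i → cP x = i := by
      intro x i hi
      by_contra hne
      exact (Finset.disjoint_left.1 (hPd _ _ hne) (hcPmem x)) hi
    have hcQuniq : ∀ x i, x ∈ Q i → cQ x = i := by
      intro x i hi
      by_contra hne
      exact (Finset.disjoint_left.1 (hQd _ _ hne) (hcQmem x)) hi
    have hfibP : ∀ i, tfib cP i = P i := by
      intro i
      ext x
      rw [mem_tfib]
      constructor
      · rintro rfl; exact hcPmem x
      · intro h; exact hcPuniq x i h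
    have hfibQ : ∀ i, tfib cQ i = Q i := by
      intro i
      ext x
      rw [mem_tfib]
      constructor
      · rintro rfl; exact hcQmem x
      · intro h; exact hcQuniq x i h
    have hPOm : cP ∈ tOm lam := mem_tOm.2 fun i => by rw [hfibP i]; exact hPc i
    have hQOm : cQ ∈ tOm lam := mem_tOm.2 fun i => by rw [hfibQ i]; exact hQc i
    have hpred : ∀ y : Equiv.Perm (Fin n),
        (∀ i, (P i).image (⇑y) = Q i) ↔ tact y cP = cQ := by
      intro y
      constructor
      · intro h
        funext x
        rw [tact_apply]
        have h1 : x ∈ Q (cP (y⁻¹ x)) := by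
          rw [← h (cP (y⁻¹ x))]
          exact Finset.mem_image.2 ⟨y⁻¹ x, hcPmem _, by simp⟩
        exact (hcQuniq x _ h1).symm
      · intro h i
        ext w
        rw [Finset.mem_image]
        constructor
        · rintro ⟨u, hu, rfl⟩
          have h2 : cQ (y u) = cP u := by
            rw [← h, tact_apply]
            congr 1
            simp
          have h3 : cP u = i := hcPuniq u i hu
          rw [← h2.trans h3]
          exact hcQmem (y u)
        · intro hw
          refine ⟨y⁻¹ w, ?_, by simp⟩
          have h2 : cP (y⁻¹ w) = cQ w := congrFun h w
          have h3 : cQ w = i := hcQuniq w i hw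
          exact (h2.trans h3) ▸ hcPmem (y⁻¹ w)
    have hseteq : {y ∈ Y | ∀ i, (P i).image (⇑y) = Q i}
        = ↑((tYF Y).filter fun y => tact y cP = cQ) := by
      ext y
      simp only [Set.mem_setOf_eq, Finset.coe_filter, mem_tYF, Finset.mem_filter]
      exact and_congr Iff.rfl (hpred y)
    rw [hseteq, Set.ncard_coe_finset]
    have h1 := main_count hT hpos hcontent hPOm hQOm
    have h2 : tN Y cP cQ = ((tYF Y).filter fun y => tact y cP = cQ).card := rfl
    rw [← h2]
    exact Nat.eq_of_mul_eq_mul_left hOmpos (h1.trans hbase.symm)
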